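/- If A ∈ 𝔹ℂ^{n×n} and B ∈ 𝔹ℂ^{m×m} are bicomplex states (hyperbolic positive matrices of trace 1), then A ⊗ⱼ B ∈ 𝔹ℂ^{nm×nm} is a bicomplex state. -/

import Mathlib

open Complex Matrix Kronecker BigOperators

open scoped ComplexOrder

/-- Bicomplex numbers, modeled as pairs `(z₁, z₂) ∈ ℂ × ℂ` representing `z₁ + j z₂`.
Addition is the componentwise (Prod) addition. -/
abbrev BC : Type := ℂ × ℂ

noncomputable section

/-- Bicomplex multiplication: `(z₁,z₂)·(w₁,w₂) = (z₁w₁ − z₂w₂, z₁w₂ + z₂w₁)`. -/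
def bcMul (z w : BC) : BC := (z.1 * w.1 - z.2 * w.2, z.1 * w.2 + z.2 * w.1)

/-- The `*`-conjugate `Z* = conj z₁ − j conj z₂`. -/
def bcStar (z : BC) : BC := ((starRingEnd ℂ) z.1, -((starRingEnd ℂ) z.2))

/-- First idempotent component `λ₁ = z₁ − i z₂`. -/
def idem1 (z : BC) : ℂ := z.1 - Complex.I * z.2

/-- Second idempotent component `λ₂ = z₁ + i z₂`. -/
def idem2 (z : BC) : ℂ := z.1 + Complex.I * z.2

/-- Membership in `𝔻⁺`: both idempotent components are nonnegative real numbers. -/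
def inDplus (z : BC) : Prop :=
  (idem1 z).im = 0 ∧ 0 ≤ (idem1 z).re ∧ (idem2 z).im = 0 ∧ 0 ≤ (idem2 z).re

/-- A bicomplex matrix `A = A₁ + j A₂` is a pair of complex matrices. -/
abbrev BCMat (I J : Type) : Type := Matrix I J ℂ × Matrix I J ℂ

/-- Bicomplex matrix multiplication, induced by bicomplex multiplication. -/
def bmul {I J K : Type} [Fintype J] (A : BCMat I J) (B : BCMat J K) : BCMat I K :=
  (A.1 * B.1 - A.2 * B.2, A.1 * B.2 + A.2 * B.1)

/-- `(A*)ᵗ`: the entrywise `*`-conjugate followed by transpose. -/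
def bcStarT {I J : Type} (A : BCMat I J) : BCMat J I := (A.1ᴴ, -(A.2ᴴ))

/-- The `(j,k)` entry of a bicomplex matrix, as a bicomplex number. -/
def bcEntry {I J : Type} (A : BCMat I J) (j : I) (k : J) : BC := (A.1 j k, A.2 j k)

/-- First idempotent component `𝒜₁ = A₁ − i A₂` of a bicomplex matrix. -/
def midem1 {I J : Type} (A : BCMat I J) : Matrix I J ℂ := A.1 - Complex.I • A.2

/-- Second idempotent component `𝒜₂ = A₁ + i A₂` of a bicomplex matrix. -/
def midem2 {I J : Type} (A : BCMat I J) : Matrix I J ℂ := A.1 + Complex.I • A.2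

/-- The bicomplex number `(c*)ᵗ · A · c`. -/
def quadForm {I : Type} [Fintype I] (A : BCMat I I) (c : I → BC) : BC :=
  ∑ j, ∑ k, bcMul (bcStar (c j)) (bcMul (bcEntry A j k) (c k))

/-- `A` is hyperbolic positive if `(c*)ᵗ · A · c ∈ 𝔻⁺` for every bicomplex vector `c`. -/
def HypPos {I : Type} [Fintype I] (A : BCMat I I) : Prop :=
  ∀ c : I → BC, inDplus (quadForm A c)

/-- Bicomplex trace `Tr(A) = Tr(A₁) + j Tr(A₂)`. -/
def bcTrace {I : Type} [Fintype I] (A : BCMat I I) : BC := (A.1.trace, A.2.trace)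

/-- The bicomplex tensor product
`A ⊗ⱼ B = (A₁⊗B₁ − A₂⊗B₂) + j (A₁⊗B₂ + A₂⊗B₁)`. -/
def bkron {I J K L : Type} (A : BCMat I J) (B : BCMat K L) : BCMat (I × K) (J × L) :=
  (A.1 ⊗ₖ B.1 - A.2 ⊗ₖ B.2, A.1 ⊗ₖ B.2 + A.2 ⊗ₖ B.1)

end

noncomputable section


section Aux

lemma idem1_bcMul (z w : BC) : idem1 (bcMul z w) = idem1 z * idem1 w := by
  simp only [idem1, bcMul]
  linear_combination (-(z.2 * w.2)) * Complex.I_mul_I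

lemma idem2_bcMul (z w : BC) : idem2 (bcMul z w) = idem2 z * idem2 w := by
  simp only [idem2, bcMul]
  linear_combination (-(z.2 * w.2)) * Complex.I_mul_I

lemma idem1_bcStar (z : BC) : idem1 (bcStar z) = (starRingEnd ℂ) (idem1 z) := by
  simp only [idem1, bcStar, map_sub, _root_.map_mul, Complex.conj_I]; ring

lemma idem2_bcStar (z : BC) : idem2 (bcStar z) = (starRingEnd ℂ) (idem2 z) := by
  simp only [idem2, bcStar, map_add, _root_.map_mul, Complex.conj_I]; ring

lemma idem1_sum {ι : Type*} (s : Finset ι) (f : ι → BC) :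
    idem1 (∑ i ∈ s, f i) = ∑ i ∈ s, idem1 (f i) := by
  simp [idem1, Prod.fst_sum, Prod.snd_sum, Finset.mul_sum, Finset.sum_sub_distrib]

lemma idem2_sum {ι : Type*} (s : Finset ι) (f : ι → BC) :
    idem2 (∑ i ∈ s, f i) = ∑ i ∈ s, idem2 (f i) := by
  simp [idem2, Prod.fst_sum, Prod.snd_sum, Finset.mul_sum, Finset.sum_add_distrib]

lemma idem1_quadForm {I : Type} [Fintype I] (M : BCMat I I) (c : I → BC) :
    idem1 (quadForm M c) =
      star (fun j => idem1 (c j)) ⬝ᵥ ((midem1 M) *ᵥ fun j => idem1 (c j)) := by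
  unfold quadForm
  rw [idem1_sum]
  simp only [idem1_sum, idem1_bcMul, idem1_bcStar]
  simp [dotProduct, Matrix.mulVec, Finset.mul_sum, midem1, bcEntry, idem1,
    mul_assoc]

lemma idem2_quadForm {I : Type} [Fintype I] (M : BCMat I I) (c : I → BC) :
    idem2 (quadForm M c) =
      star (fun j => idem2 (c j)) ⬝ᵥ ((midem2 M) *ᵥ fun j => idem2 (c j)) := by
  unfold quadForm
  rw [idem2_sum]
  simp only [idem2_sum, idem2_bcMul, idem2_bcStar]
  simp [dotProduct, Matrix.mulVec, Finset.mul_sum, midem2, bcEntry, idem2,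
    mul_assoc]

lemma posSemidef_of_quad {I : Type} [Fintype I] [DecidableEq I] {M : Matrix I I ℂ}
    (h : ∀ x : I → ℂ, ((star x) ⬝ᵥ (M *ᵥ x)).im = 0 ∧ 0 ≤ ((star x) ⬝ᵥ (M *ᵥ x)).re) :
    M.PosSemidef := by
  have herm : M.IsHermitian := by
    rw [Matrix.isHermitian_iff_isSymmetric, LinearMap.isSymmetric_iff_inner_map_self_real]
    intro v
    obtain ⟨x, rfl⟩ := (WithLp.equiv 2 (I → ℂ)).symm.surjective v
    rw [show (WithLp.equiv 2 (I → ℂ)).symm x = WithLp.toLp 2 x from rfl,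
      Matrix.toEuclideanLin_toLp, EuclideanSpace.inner_toLp_toLp, dotProduct_comm,
      Matrix.toLin'_apply]
    have h1 : star (M *ᵥ x) ⬝ᵥ x = (starRingEnd ℂ) ((star x) ⬝ᵥ (M *ᵥ x)) := by
      simp [dotProduct, map_sum, mul_comm]
    rw [h1, Complex.conj_conj]
    exact (Complex.conj_eq_iff_im.mpr (h x).1).symm
  refine Matrix.posSemidef_iff_dotProduct_mulVec.mpr ⟨herm, fun x => ?_⟩
  rw [Complex.le_def]
  refine ⟨by simpa using (h x).2, by simpa using ((h x).1).symm⟩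

lemma hypPos_psd {I : Type} [Fintype I] [DecidableEq I] {A : BCMat I I} (hA : HypPos A) :
    (midem1 A).PosSemidef ∧ (midem2 A).PosSemidef := by
  constructor
  · apply posSemidef_of_quad
    intro x
    have key := idem1_quadForm A (fun j => ((x j : ℂ), (0 : ℂ)))
    have hx : (fun j => idem1 ((x j : ℂ), (0 : ℂ))) = x := by
      funext j; simp [idem1]
    rw [hx] at key
    obtain ⟨h1, h2, _, _⟩ := hA (fun j => ((x j : ℂ), (0 : ℂ)))
    exact ⟨key ▸ h1, key ▸ h2⟩
  · apply posSemidef_of_quad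
    intro x
    have key := idem2_quadForm A (fun j => ((x j : ℂ), (0 : ℂ)))
    have hx : (fun j => idem2 ((x j : ℂ), (0 : ℂ))) = x := by
      funext j; simp [idem2]
    rw [hx] at key
    obtain ⟨_, _, h1, h2⟩ := hA (fun j => ((x j : ℂ), (0 : ℂ)))
    exact ⟨key ▸ h1, key ▸ h2⟩

lemma posSemidef_kron {I J : Type} [Fintype I] [Fintype J] [DecidableEq I] [DecidableEq J]
    {M : Matrix I I ℂ} {P : Matrix J J ℂ}
    (hM : M.PosSemidef) (hP : P.PosSemidef) : (M ⊗ₖ P).PosSemidef := by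
  exact hM.kronecker hP

lemma midem1_bkron {I J : Type} (A : BCMat I I) (B : BCMat J J) :
    midem1 (bkron A B) = (midem1 A) ⊗ₖ (midem1 B) := by
  ext ⟨i, k⟩ ⟨j, l⟩
  simp only [midem1, bkron, Matrix.kroneckerMap_apply, Matrix.sub_apply, Matrix.add_apply,
    Matrix.smul_apply, smul_eq_mul]
  linear_combination (-(A.2 i j * B.2 k l)) * Complex.I_mul_I

lemma midem2_bkron {I J : Type} (A : BCMat I I) (B : BCMat J J) :
    midem2 (bkron A B) = (midem2 A) ⊗ₖ (midem2 B) := by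
  ext ⟨i, k⟩ ⟨j, l⟩
  simp only [midem2, bkron, Matrix.kroneckerMap_apply, Matrix.sub_apply, Matrix.add_apply,
    Matrix.smul_apply, smul_eq_mul]
  linear_combination (-(A.2 i j * B.2 k l)) * Complex.I_mul_I

end Aux

/-- the bicomplex tensor product of bicomplex states is a
bicomplex state. -/
theorem bkron_state {n m : ℕ} (A : BCMat (Fin n) (Fin n)) (B : BCMat (Fin m) (Fin m))
    (hA : HypPos A) (hTA : bcTrace A = ((1 : ℂ), (0 : ℂ)))
    (hB : HypPos B) (hTB : bcTrace B = ((1 : ℂ), (0 : ℂ))) :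
    HypPos (bkron A B) ∧ bcTrace (bkron A B) = ((1 : ℂ), (0 : ℂ)) := by
  constructor
  · -- HypPos
    obtain ⟨hA1, hA2⟩ := hypPos_psd hA
    obtain ⟨hB1, hB2⟩ := hypPos_psd hB
    have hK1 := posSemidef_kron hA1 hB1
    have hK2 := posSemidef_kron hA2 hB2
    intro c
    have e1 := idem1_quadForm (bkron A B) c
    have e2 := idem2_quadForm (bkron A B) c
    rw [midem1_bkron] at e1
    rw [midem2_bkron] at e2
    have q1 := hK1.dotProduct_mulVec_nonneg (fun j => idem1 (c j))
    have q2 := hK2.dotProduct_mulVec_nonneg (fun j => idem2 (c j))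
    rw [Complex.le_def] at q1 q2
    refine ⟨?_, ?_, ?_, ?_⟩
    · rw [e1]; exact q1.2.symm
    · rw [e1]; exact q1.1
    · rw [e2]; exact q2.2.symm
    · rw [e2]; exact q2.1
  · -- trace
    have hA1 : A.1.trace = 1 := congrArg Prod.fst hTA
    have hA2 : A.2.trace = 0 := congrArg Prod.snd hTA
    have hB1 : B.1.trace = 1 := congrArg Prod.fst hTB
    have hB2 : B.2.trace = 0 := congrArg Prod.snd hTB
    unfold bcTrace bkron
    simp [Matrix.trace_sub, Matrix.trace_add, Matrix.trace_kronecker, hA1, hA2, hB1, hB2]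


end
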